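/- arXiv:2508.06661 — 2 statements merged into one kernel-verified Lean document; each statement's English description precedes it below -/
import Mathlib

section
/- Under the setup of the approximate Bellman operator, the sequence v^{k+1} = T^δ v^k satisfies ψ(v^k) ≤ γ^k ψ(v^0) + 2(1+γ)δ(1-γ^k)/(1-γ) for all k ∈ ℕ, and in particular ψ(v^k) ≤ γ^k ψ(v^0) + 2(1+γ)δ/(1-γ). -/
theorem approx_vi_residual_bound
    {S : Type*} [Fintype S] [Nonempty S]
    (γ δ : ℝ) (hγ0 : 0 < γ) (hγ1 : γ < 1) (hδ : 0 ≤ δ)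
    (Tstar Tδ : (S → ℝ) → (S → ℝ))
    (hT : ∀ u v : S → ℝ, ‖Tstar u - Tstar v‖ ≤ γ * ‖u - v‖)
    (happrox : ∀ v : S → ℝ, ‖Tδ v - Tstar v‖ ≤ δ)
    (v : ℕ → (S → ℝ)) (hv : ∀ k : ℕ, v (k + 1) = Tδ (v k)) :
    ∀ k : ℕ,
      ‖Tδ (v k) - v k‖ ≤
          γ ^ k * ‖Tδ (v 0) - v 0‖ + 2 * (1 + γ) * δ * (1 - γ ^ k) / (1 - γ)
      ∧ ‖Tδ (v k) - v k‖ ≤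
          γ ^ k * ‖Tδ (v 0) - v 0‖ + 2 * (1 + γ) * δ / (1 - γ) := by
  have h1γ : (0:ℝ) < 1 - γ := by linarith
  have step : ∀ k : ℕ, ‖Tδ (v (k+1)) - v (k+1)‖ ≤ γ * ‖Tδ (v k) - v k‖ + 2 * δ := by
    intro k
    rw [hv k]
    set w := v k
    have hdec : Tδ (Tδ w) - Tδ w =
        (Tδ (Tδ w) - Tstar (Tδ w)) + (Tstar (Tδ w) - Tstar w) + (Tstar w - Tδ w) := by
      abel
    calc ‖Tδ (Tδ w) - Tδ w‖
        = ‖(Tδ (Tδ w) - Tstar (Tδ w)) + (Tstar (Tδ w) - Tstar w) + (Tstar w - Tδ w)‖ := by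
          rw [hdec]
      _ ≤ ‖Tδ (Tδ w) - Tstar (Tδ w)‖ + ‖Tstar (Tδ w) - Tstar w‖ + ‖Tstar w - Tδ w‖ :=
          norm_add₃_le
      _ ≤ δ + γ * ‖Tδ w - w‖ + δ := by
          have h1 := happrox (Tδ w)
          have h2 := hT (Tδ w) w
          have h3 : ‖Tstar w - Tδ w‖ ≤ δ := by rw [norm_sub_rev]; exact happrox w
          linarith
      _ = γ * ‖Tδ w - w‖ + 2 * δ := by ring
  have main : ∀ k : ℕ, ‖Tδ (v k) - v k‖ ≤
      γ ^ k * ‖Tδ (v 0) - v 0‖ + 2 * (1 + γ) * δ * (1 - γ ^ k) / (1 - γ) := by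
    intro k
    induction k with
    | zero => simp
    | succ n ih =>
      have h := step n
      have hγn : γ ^ n ≤ 1 := pow_le_one₀ hγ0.le hγ1.le
      have key : γ * (2 * (1 + γ) * δ * (1 - γ ^ n) / (1 - γ)) + 2 * δ ≤
          2 * (1 + γ) * δ * (1 - γ ^ (n+1)) / (1 - γ) := by
        have hd : 2 * (1 + γ) * δ * (1 - γ ^ (n+1)) / (1 - γ) -
            γ * (2 * (1 + γ) * δ * (1 - γ ^ n) / (1 - γ)) = 2 * (1 + γ) * δ := by
          field_simp
          ring
        nlinarith [mul_nonneg hγ0.le hδ]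
      calc ‖Tδ (v (n+1)) - v (n+1)‖ ≤ γ * ‖Tδ (v n) - v n‖ + 2 * δ := h
        _ ≤ γ * (γ ^ n * ‖Tδ (v 0) - v 0‖ + 2 * (1 + γ) * δ * (1 - γ ^ n) / (1 - γ)) + 2 * δ := by
            nlinarith [norm_nonneg (Tδ (v n) - v n)]
        _ ≤ γ ^ (n+1) * ‖Tδ (v 0) - v 0‖ + 2 * (1 + γ) * δ * (1 - γ ^ (n+1)) / (1 - γ) := by
            rw [pow_succ] at key ⊢
            linarith
  intro k
  refine ⟨main k, (main k).trans ?_⟩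
  have hγn : γ ^ k ≤ 1 := pow_le_one₀ hγ0.le hγ1.le
  have : 2 * (1 + γ) * δ * (1 - γ ^ k) / (1 - γ) ≤ 2 * (1 + γ) * δ / (1 - γ) := by
    rw [div_le_div_iff₀ h1γ h1γ]
    nlinarith [mul_nonneg (mul_nonneg (mul_nonneg (mul_nonneg (by norm_num : (0:ℝ) ≤ 2)
      (by linarith : (0:ℝ) ≤ 1 + γ)) hδ) h1γ.le) (pow_nonneg hγ0.le k)]
  linarith
end

section
/- In Example 4.1 with v^0 = 0, γ = 3/5, and the Newton direction d^1 = (3/4 - √2/2, -5/4, 5/4) (computed using the minimizer policy σ(s1)=b1), the function g(α) = ψ₂(v^0 + α d^1)² - ψ₂(v^0)² equals ((3√2-4)/2)α + ((13-6√2)/4)α² for α ∈ (0,1], which is strictly positive for all α ∈ (0,1]. Hence no step size along d^1 decreases the squared L₂ Bellman residual. -/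
/-- Bellman equilibrium operator of the Markov game in Example 4.1 with γ = 3/5. -/
noncomputable def TstarEx (v : Fin 3 → ℝ) : Fin 3 → ℝ :=
  ![min (-(Real.sqrt 2) / 2 + (3 / 5) * v 2) (-(Real.sqrt 2) / 2 + (3 / 5) * v 1),
    -1 / 2 + (3 / 5) * v 1,
    1 / 2 + (3 / 5) * v 2]

/-- The squared L₂ Bellman residual. -/
noncomputable def psi2sq (v : Fin 3 → ℝ) : ℝ :=
  ∑ s : Fin 3, (TstarEx v s - v s) ^ 2

/-- The Newton direction computed with the minimizer policy σ(s1) = b1. -/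
noncomputable def dEx : Fin 3 → ℝ :=
  ![3 / 4 - Real.sqrt 2 / 2, -5 / 4, 5 / 4]

theorem ft_no_descent_step :
    ∀ α : ℝ, 0 < α → α ≤ 1 →
      psi2sq ((0 : Fin 3 → ℝ) + α • dEx) - psi2sq 0 =
          (3 * Real.sqrt 2 - 4) / 2 * α + (13 - 6 * Real.sqrt 2) / 4 * α ^ 2
      ∧ 0 < psi2sq ((0 : Fin 3 → ℝ) + α • dEx) - psi2sq 0 := by
  intro α h0 h1
  have hs2 : Real.sqrt 2 ^ 2 = 2 := Real.sq_sqrt (by norm_num)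
  have hs1 : 1 < Real.sqrt 2 := by nlinarith [Real.sqrt_nonneg 2]
  have hs3 : Real.sqrt 2 < 3 / 2 := by nlinarith [Real.sqrt_nonneg 2]
  simp only [psi2sq, TstarEx, dEx, Fin.sum_univ_three, Pi.add_apply, Pi.smul_apply,
    Pi.zero_apply, smul_eq_mul, Matrix.cons_val_zero, Matrix.cons_val_one, Matrix.head_cons,
    Matrix.cons_val_two, Matrix.tail_cons]
  rw [min_eq_right (by nlinarith), min_self]
  have heq : (-Real.sqrt 2 / 2 + 3 / 5 * (0 + α * (-5 / 4)) -
        (0 + α * (3 / 4 - Real.sqrt 2 / 2))) ^ 2 +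
      (-1 / 2 + 3 / 5 * (0 + α * (-5 / 4)) - (0 + α * (-5 / 4))) ^ 2 +
      (1 / 2 + 3 / 5 * (0 + α * (5 / 4)) - (0 + α * (5 / 4))) ^ 2 -
      ((-Real.sqrt 2 / 2 + 3 / 5 * (0 : ℝ) - 0) ^ 2 + (-1 / 2 + 3 / 5 * (0:ℝ) - 0) ^ 2 +
        (1 / 2 + 3 / 5 * (0:ℝ) - 0) ^ 2) =
      (3 * Real.sqrt 2 - 4) / 2 * α + (13 - 6 * Real.sqrt 2) / 4 * α ^ 2 := by
    linear_combination (((α - 1) ^ 2 - 1) / 4) * hs2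
  constructor
  · linarith [heq]
  · rw [show (0:ℝ) = 0 by rfl]
    have : 0 < (3 * Real.sqrt 2 - 4) / 2 * α + (13 - 6 * Real.sqrt 2) / 4 * α ^ 2 := by
      nlinarith
    linarith [heq]
end
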